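/- KPA insecurity under exponential distance leakage: Suppose the adversary knows plaintexts p₁,...,p_{d+2} ∈ R^d and leaked values E_i = exp(r₁(‖p_i‖² − 2p_iᵀq) + r₂) > 0 for unknown q ∈ R^d and r₁ ≠ 0, r₂ ∈ R. If the matrix with rows [−2p_iᵀ, ‖p_i‖², 1] is invertible, then q is uniquely determined by the values E_i (via taking logarithms and solving the linear system). -/
import Mathlib


open Matrix

theorem dot_append {d : ℕ} (a b : Fin d → ℝ) (c e : Fin 2 → ℝ) :
    Fin.append a c ⬝ᵥ Fin.append b e = a ⬝ᵥ b + c ⬝ᵥ e := by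
  simp only [dotProduct, Fin.sum_univ_add, Fin.append_left, Fin.append_right]

theorem stmt12 (d : ℕ) (p : Fin (d + 2) → Fin d → ℝ)
    (Mc : Matrix (Fin (d + 2)) (Fin (d + 2)) ℝ)
    (hMc : Mc = Matrix.of fun i => Fin.append ((-2 : ℝ) • p i) ![p i ⬝ᵥ p i, (1 : ℝ)])
    (hinv : IsUnit Mc.det)
    (q q' : Fin d → ℝ) (r₁ r₂ r₁' r₂' : ℝ) (hr₁ : r₁ ≠ 0) (hr₁' : r₁' ≠ 0)
    (hE : ∀ i, Real.exp (r₁ * (p i ⬝ᵥ p i - 2 * (p i ⬝ᵥ q)) + r₂)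
             = Real.exp (r₁' * (p i ⬝ᵥ p i - 2 * (p i ⬝ᵥ q')) + r₂')) :
    q = q' := by
  have hL : ∀ i, r₁ * (p i ⬝ᵥ p i - 2 * (p i ⬝ᵥ q)) + r₂
      = r₁' * (p i ⬝ᵥ p i - 2 * (p i ⬝ᵥ q')) + r₂' := fun i =>
    Real.exp_injective (hE i)
  set x : Fin (d + 2) → ℝ := Fin.append (r₁ • q) ![r₁, r₂] with hx
  set x' : Fin (d + 2) → ℝ := Fin.append (r₁' • q') ![r₁', r₂'] with hx'
  have key : ∀ (s : ℝ) (u : Fin d → ℝ) (t : ℝ) i,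
      Mc.mulVec (Fin.append (s • u) ![s, t]) i
        = s * (p i ⬝ᵥ p i - 2 * (p i ⬝ᵥ u)) + t := by
    intro s u t i
    rw [hMc]
    show Fin.append ((-2 : ℝ) • p i) ![p i ⬝ᵥ p i, (1 : ℝ)] ⬝ᵥ _ = _
    rw [dot_append]
    simp only [dotProduct, Fin.sum_univ_two, Matrix.cons_val_zero, Matrix.cons_val_one,
      Matrix.head_cons, Pi.smul_apply, smul_eq_mul, Finset.mul_sum, Finset.sum_congr]
    have hs : ∑ x : Fin d, -2 * p i x * (s * u x)
        = -(s * ∑ x : Fin d, 2 * (p i x * u x)) := by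
      rw [Finset.mul_sum, ← Finset.sum_neg_distrib]
      exact Finset.sum_congr rfl fun j _ => by ring
    rw [hs]
    ring
  have hmv : Mc.mulVec x = Mc.mulVec x' := by
    funext i
    rw [hx, hx', key, key, hL]
  have hxx : x = x' := Matrix.mulVec_injective_iff_isUnit.mpr ((Matrix.isUnit_iff_isUnit_det Mc).mpr hinv) hmv
  have hr : r₁ = r₁' := by
    have := congrFun hxx (Fin.natAdd d 0)
    simpa [hx, hx', Fin.append_right] using this
  funext j
  have := congrFun hxx (Fin.castAdd 2 j)
  simp only [hx, hx', Fin.append_left, Pi.smul_apply, smul_eq_mul] at this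
  rw [hr] at this
  exact mul_left_cancel₀ hr₁' this
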